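/- Stable entropy of two-step mixing: if p' is obtained from pseudo-distribution p by a two-step mixing process, then H(p') ≥ H(p). -/
import Mathlib


open Finset

/-- Entropy of a single value, `H(u) = -u * log u` (natural logarithm). -/
noncomputable def Hf (u : ℝ) : ℝ := -u * Real.log u

/-- Stable entropy of the two-step mixing process: if `p'` is obtained from the
pseudo-distribution `p` by a two-step mixing process, then `H(p') ≥ H(p)`. -/
theorem two_step_mixing_stable_entropy {V ι : Type*} [Fintype V] [DecidableEq V] [Fintype ι]
    (W : ι → Finset V) (p : V → ℝ)
    (hp0 : ∀ v, 0 ≤ p v) (hp1 : ∀ v, p v ≤ 1)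
    (w : V → ℕ) (hw : ∀ v, w v = (univ.filter (fun i => v ∈ W i)).card)
    (hwpos : ∀ v, 0 < w v)
    (γ : V → ℝ) (hγ : ∀ v, γ v = 1 / (w v : ℝ))
    (q : ι → ℝ) (hq : ∀ i, q i = ∑ v ∈ W i, γ v * p v)
    (γW : ι → ℝ) (hγW : ∀ i, γW i = ∑ v ∈ W i, γ v)
    (p' : V → ℝ)
    (hp' : ∀ v, p' v = ∑ i ∈ univ.filter (fun i => v ∈ W i), (γ v / γW i) * q i) :
    ∑ v, Hf (p v) ≤ ∑ v, Hf (p' v) := by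
  classical
  have hγpos : ∀ v, 0 < γ v := by
    intro v
    rw [hγ]
    have := hwpos v
    positivity
  have hγWpos : ∀ i v, v ∈ W i → 0 < γW i := by
    intro i v hv
    rw [hγW]
    exact Finset.sum_pos (fun u _ => hγpos u) ⟨v, hv⟩
  set M : V → V → ℝ := fun v u =>
    ∑ i ∈ univ.filter (fun i => v ∈ W i ∧ u ∈ W i), γ v * γ u / γW i with hM
  have hM0 : ∀ v u, 0 ≤ M v u := by
    intro v u
    apply Finset.sum_nonneg
    intro i hi
    simp only [mem_filter] at hi
    have := hγWpos i v hi.2.1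
    have h1 := hγpos v
    have h2 := hγpos u
    positivity
  -- p' v = ∑ u, M v u * p u
  have hp'M : ∀ v, p' v = ∑ u, M v u * p u := by
    intro v
    rw [hp']
    have step1 : ∀ i ∈ univ.filter (fun i => v ∈ W i),
        (γ v / γW i) * q i = ∑ u, (if u ∈ W i then γ v * γ u / γW i * p u else 0) := by
      intro i _
      rw [hq, Finset.mul_sum, Finset.sum_ite_mem, Finset.univ_inter]
      apply Finset.sum_congr rfl
      intro u _
      ring
    rw [Finset.sum_congr rfl step1, Finset.sum_comm]
    apply Finset.sum_congr rfl
    intro u _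
    rw [hM, Finset.sum_mul, Finset.sum_filter, Finset.sum_filter]
    apply Finset.sum_congr rfl
    intro i _
    by_cases h1 : v ∈ W i <;> by_cases h2 : u ∈ W i <;> simp [h1, h2]
  -- the generic "stochastic" sum
  have hsum : ∀ x : V,
      ∑ y, ∑ i ∈ univ.filter (fun i => x ∈ W i ∧ y ∈ W i), γ x * γ y / γW i = 1 := by
    intro x
    have key : ∀ y, (∑ i ∈ univ.filter (fun i => x ∈ W i ∧ y ∈ W i), γ x * γ y / γW i)
        = ∑ i, if x ∈ W i then (if y ∈ W i then γ x * γ y / γW i else 0) else 0 := by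
      intro y
      rw [Finset.sum_filter]
      apply Finset.sum_congr rfl
      intro i _
      by_cases h1 : x ∈ W i <;> by_cases h2 : y ∈ W i <;> simp [h1, h2]
    simp_rw [key]
    rw [Finset.sum_comm]
    have inner : ∀ i,
        (∑ y, if x ∈ W i then (if y ∈ W i then γ x * γ y / γW i else 0) else 0)
        = if x ∈ W i then γ x else 0 := by
      intro i
      by_cases h1 : x ∈ W i
      · simp only [h1, if_true]
        rw [Finset.sum_ite_mem, Finset.univ_inter]
        have hWne : γW i ≠ 0 := (hγWpos i x h1).ne'
        calc ∑ y ∈ W i, γ x * γ y / γW i = (γ x / γW i) * ∑ y ∈ W i, γ y := by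
              rw [Finset.mul_sum]
              apply Finset.sum_congr rfl
              intro y _
              ring
          _ = (γ x / γW i) * γW i := by rw [← hγW]
          _ = γ x := by field_simp
      · simp [h1]
    simp_rw [inner]
    rw [Finset.sum_ite, Finset.sum_const, Finset.sum_const, smul_zero, add_zero,
      nsmul_eq_mul, ← hw, hγ]
    have : (w x : ℝ) ≠ 0 := Nat.cast_ne_zero.mpr (hwpos x).ne'
    field_simp
  have hrow : ∀ v, ∑ u, M v u = 1 := fun v => hsum v
  have hcol : ∀ u, ∑ v, M v u = 1 := by
    intro u
    have : ∀ v, M v u = ∑ i ∈ univ.filter (fun i => u ∈ W i ∧ v ∈ W i), γ u * γ v / γW i := by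
      intro v
      rw [hM]
      apply Finset.sum_congr
      · ext i; simp [and_comm]
      · intro i _; ring
    simp_rw [this]
    exact hsum u
  -- Jensen
  have hHf : Hf = Real.negMulLog := rfl
  calc ∑ v, Hf (p v) = ∑ u, (∑ v, M v u) * Hf (p u) := by
        apply Finset.sum_congr rfl
        intro u _
        rw [hcol u, one_mul]
    _ = ∑ u, ∑ v, M v u * Hf (p u) := by
        apply Finset.sum_congr rfl
        intro u _
        rw [Finset.sum_mul]
    _ = ∑ v, ∑ u, M v u * Hf (p u) := Finset.sum_comm
    _ ≤ ∑ v, Hf (p' v) := by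
        apply Finset.sum_le_sum
        intro v _
        rw [hp'M v, hHf]
        have jensen := Real.concaveOn_negMulLog.le_map_sum (t := univ) (w := fun u => M v u)
          (p := p) (fun u _ => hM0 v u) (hrow v) (fun u _ => Set.mem_Ici.mpr (hp0 u))
        simpa only [smul_eq_mul] using jensen
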